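/- Let I = (x_1,...,x_{n-1})² + x_n·(x_1,...,x_{n-1}) + (x_n^{s+1}) in S = K[x_1,...,x_n], or I = (x_1,...,x_{n-1})² + x_n·(x_1,...,x_{n-1}). In either case, letting σ be the permutation ordering the variables as x_n, x_1, ..., x_{n-1}, one has d_σ(I) = (x_1,...,x_{n-1}, x_n^s) in the first case and d_σ(I) = (x_1,...,x_{n-1}) in the second, and in both cases d_σ(I)² ⊆ I, so I is d_σ-Golod. -/

import Mathlib

open Classical in
/-- The operator `d^r` on `K[x_1,…,x_n]`: for `f` in the maximal ideal it is the unique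
family with `f = Σ_r d^r(f)·x_r` and `d^r(f) ∈ K[x_r,…,x_n]`; on a monomial whose
smallest variable is `x_r` it divides by `x_r`, and it kills all other monomials. -/
noncomputable def dPoly {K : Type*} [Field K] {n : ℕ} (r : Fin n)
    (f : MvPolynomial (Fin n) K) : MvPolynomial (Fin n) K :=
  ∑ m ∈ f.support.filter (fun m => (∀ i : Fin n, i < r → m i = 0) ∧ m r ≠ 0),
    MvPolynomial.monomial (m - Finsupp.single r 1) (MvPolynomial.coeff m f)

/-- The operator `d_σ^i` for a permutation `σ` of the variables:
`d_σ^i(f) = σ(d^i(f(x_{σ⁻¹(1)},…,x_{σ⁻¹(n)})))`. -/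
noncomputable def dSigmaPoly {K : Type*} [Field K] {n : ℕ} (σ : Equiv.Perm (Fin n))
    (i : Fin n) (f : MvPolynomial (Fin n) K) : MvPolynomial (Fin n) K :=
  MvPolynomial.rename σ (dPoly i (MvPolynomial.rename σ.symm f))

/-- `d_σ(I)` is the ideal generated by the elements `d_σ^i(f)` with `f ∈ I`. -/
noncomputable def dIdealSigma {K : Type*} [Field K] {n : ℕ} (σ : Equiv.Perm (Fin n))
    (I : Ideal (MvPolynomial (Fin n) K)) : Ideal (MvPolynomial (Fin n) K) :=
  Ideal.span {g | ∃ f ∈ I, ∃ i : Fin n, g = dSigmaPoly σ i f}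

namespace StretchedAux

open MvPolynomial

variable {K : Type*} [Field K] {n : ℕ}

lemma dPoly_support_subset (r : Fin n) (f : MvPolynomial (Fin n) K) {m : Fin n →₀ ℕ}
    (hm : m ∈ (dPoly r f).support) :
    m + Finsupp.single r 1 ∈ f.support ∧ ∀ i : Fin n, i < r → m i = 0 := by
  rw [mem_support_iff, dPoly, coeff_sum] at hm
  obtain ⟨m', hm'f, hne⟩ := Finset.exists_ne_zero_of_sum_ne_zero hm
  rw [Finset.mem_filter] at hm'f
  obtain ⟨hsup, hlt, hr⟩ := hm'f
  rw [coeff_monomial] at hne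
  by_cases heq : m' - Finsupp.single r 1 = m
  · subst heq
    refine ⟨?_, ?_⟩
    · rwa [tsub_add_cancel_of_le (Finsupp.single_le_iff.mpr (Nat.one_le_iff_ne_zero.mpr hr))]
    · intro i hi
      rw [Finsupp.tsub_apply, hlt i hi]
      simp
  · simp [heq] at hne

open Classical in
lemma dPoly_monomial (r : Fin n) (m : Fin n →₀ ℕ) (c : K) (hc : c ≠ 0)
    (h1 : ∀ i : Fin n, i < r → m i = 0) (h2 : m r ≠ 0) :
    dPoly r (monomial m c) = monomial (m - Finsupp.single r 1) c := by
  rw [dPoly, support_monomial, if_neg hc, Finset.filter_singleton, if_pos ⟨h1, h2⟩,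
    Finset.sum_singleton, coeff_monomial, if_pos rfl]

def suppIdeal (P : (Fin n →₀ ℕ) → Prop) (hP : ∀ a b : Fin n →₀ ℕ, P b → P (a + b)) :
    Ideal (MvPolynomial (Fin n) K) where
  carrier := {f | ∀ m ∈ f.support, P m}
  zero_mem' := by simp
  add_mem' := by
    intro a b ha hb m hm
    classical
    rcases Finset.mem_union.mp (MvPolynomial.support_add hm) with h | h
    · exact ha m h
    · exact hb m h
  smul_mem' := by
    intro c f hf m hm
    rw [smul_eq_mul] at hm
    classical
    rcases Finset.mem_add.mp (MvPolynomial.support_mul c f hm) with ⟨a, ha, b, hb, rfl⟩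
    exact hP a b (hf b hb)

lemma mem_suppIdeal {P : (Fin n →₀ ℕ) → Prop} {hP : ∀ a b : Fin n →₀ ℕ, P b → P (a + b)}
    {f : MvPolynomial (Fin n) K} :
    f ∈ suppIdeal P hP ↔ ∀ m ∈ f.support, P m := Iff.rfl

lemma mem_of_support {J : Ideal (MvPolynomial (Fin n) K)} {f : MvPolynomial (Fin n) K}
    (h : ∀ m ∈ f.support, (monomial m (coeff m f) : MvPolynomial (Fin n) K) ∈ J) :
    f ∈ J := by
  rw [f.as_sum]
  exact Ideal.sum_mem J h

lemma X_pow_dvd_monomial' {i : Fin n} {k : ℕ} {m : Fin n →₀ ℕ} {c : K} (h : k ≤ m i) :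
    (X i : MvPolynomial (Fin n) K) ^ k ∣ monomial m c :=
  ⟨monomial (m - Finsupp.single i k) c, by
    rw [X_pow_eq_monomial, monomial_mul, one_mul,
      add_tsub_cancel_of_le (Finsupp.single_le_iff.mpr h)]⟩

lemma X_mul_X_eq (a b : Fin n) : (X a : MvPolynomial (Fin n) K) * X b
    = monomial (Finsupp.single a 1 + Finsupp.single b 1) 1 := by
  rw [show (X a : MvPolynomial (Fin n) K) = monomial (Finsupp.single a 1) 1 from rfl,
    show (X b : MvPolynomial (Fin n) K) = monomial (Finsupp.single b 1) 1 from rfl,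
    monomial_mul, one_mul]

/-- The monomial predicate for `(x₁,…,xₙ)² + x₀(x₁,…,xₙ)` (variables `x₁,…` are the
nonzero indices). -/
def P2 (m : Fin (n + 1) →₀ ℕ) : Prop :=
  (∃ i j : Fin (n + 1), i ≠ 0 ∧ j ≠ 0 ∧ Finsupp.single i 1 + Finsupp.single j 1 ≤ m) ∨
    (1 ≤ m 0 ∧ ∃ i : Fin (n + 1), i ≠ 0 ∧ 1 ≤ m i)

def P1 (s : ℕ) (m : Fin (n + 1) →₀ ℕ) : Prop := P2 m ∨ s + 1 ≤ m 0

lemma P2_mono : ∀ a b : Fin (n + 1) →₀ ℕ, P2 b → P2 (a + b) := by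
  intro a b h
  rcases h with ⟨i, j, hi, hj, hle⟩ | ⟨h1, i, hi, hmi⟩
  · exact Or.inl ⟨i, j, hi, hj, hle.trans le_add_self⟩
  · refine Or.inr ⟨?_, i, hi, ?_⟩ <;> rw [Finsupp.add_apply] <;> omega

lemma P1_mono (s : ℕ) : ∀ a b : Fin (n + 1) →₀ ℕ, P1 s b → P1 s (a + b) := by
  intro a b h
  rcases h with h | h
  · exact Or.inl (P2_mono a b h)
  · refine Or.inr ?_
    rw [Finsupp.add_apply]; omega

lemma keyA {r i j : Fin (n + 1)} {m' : Fin (n + 1) →₀ ℕ} (hi : i ≠ 0) (hj : j ≠ 0)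
    (hle : Finsupp.single i 1 + Finsupp.single j 1 ≤ m' + Finsupp.single r 1) :
    ∃ k : Fin (n + 1), k ≠ 0 ∧ 1 ≤ m' k := by
  have H := Finsupp.le_def.mp hle
  by_cases hir : i = r
  · by_cases hjr : j = r
    · refine ⟨i, hi, ?_⟩
      have := H i
      simp [Finsupp.add_apply, Finsupp.single_apply, hjr.trans hir.symm, ← hir] at this
      omega
    · refine ⟨j, hj, ?_⟩
      have := H j
      simp [Finsupp.add_apply, Finsupp.single_apply, Ne.symm hjr] at this
      omega
  · refine ⟨i, hi, ?_⟩
    have := H i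
    simp [Finsupp.add_apply, Finsupp.single_apply, Ne.symm hir] at this
    omega

lemma keyB {r : Fin (n + 1)} {m' : Fin (n + 1) →₀ ℕ}
    (h0 : ∀ i : Fin (n + 1), i < r → m' i = 0)
    (h1 : 1 ≤ ((m' + Finsupp.single r 1 : Fin (n + 1) →₀ ℕ)) 0) {i : Fin (n + 1)} (hi : i ≠ 0)
    (hmi : 1 ≤ ((m' + Finsupp.single r 1 : Fin (n + 1) →₀ ℕ)) i) : ∃ k : Fin (n + 1), k ≠ 0 ∧ 1 ≤ m' k := by
  by_cases hr : r = 0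
  · subst hr
    refine ⟨i, hi, ?_⟩
    have := hmi
    simp [Finsupp.add_apply, Finsupp.single_apply, Ne.symm hi] at this
    omega
  · exfalso
    have h00 : m' 0 = 0 := h0 0 (Fin.pos_of_ne_zero hr)
    simp [Finsupp.add_apply, Finsupp.single_apply, h00, hr] at h1

lemma keyC {s : ℕ} {r : Fin (n + 1)} {m' : Fin (n + 1) →₀ ℕ}
    (h0 : ∀ i : Fin (n + 1), i < r → m' i = 0)
    (h : s + 1 ≤ ((m' + Finsupp.single r 1 : Fin (n + 1) →₀ ℕ)) 0) : s ≤ m' 0 := by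
  by_cases hr : r = 0
  · subst hr
    have h' : s + 1 ≤ m' 0 + 1 := by
      simpa [Finsupp.add_apply, Finsupp.single_apply] using h
    omega
  · have h00 : m' 0 = 0 := h0 0 (Fin.pos_of_ne_zero hr)
    simp only [Finsupp.add_apply, Finsupp.single_apply, h00] at h
    rw [if_neg hr] at h
    omega

lemma mem_spanJ_of_forall_support {s : ℕ} {f : MvPolynomial (Fin (n + 1)) K}
    (h : ∀ m ∈ f.support, (∃ i : Fin (n + 1), i ≠ 0 ∧ 1 ≤ m i) ∨ s ≤ m 0) :
    f ∈ Ideal.span (Set.range fun i : Fin n => (X i.succ : MvPolynomial (Fin (n + 1)) K)) +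
      Ideal.span {(X (0 : Fin (n + 1)) : MvPolynomial (Fin (n + 1)) K) ^ s} := by
  apply mem_of_support
  intro m hm
  rcases h m hm with ⟨i, hi, hle⟩ | hle
  · apply Submodule.mem_sup_left
    obtain ⟨i0, rfl⟩ := Fin.eq_succ_of_ne_zero hi
    obtain ⟨q, hq⟩ := X_pow_dvd_monomial' (k := 1) (c := coeff m f) hle
    rw [pow_one] at hq
    rw [hq]
    exact Ideal.mul_mem_right _ _ (Ideal.subset_span ⟨i0, rfl⟩)
  · apply Submodule.mem_sup_right
    rw [Ideal.mem_span_singleton]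
    exact X_pow_dvd_monomial' hle

lemma mem_spanQ_of_forall_support {f : MvPolynomial (Fin (n + 1)) K}
    (h : ∀ m ∈ f.support, ∃ i : Fin (n + 1), i ≠ 0 ∧ 1 ≤ m i) :
    f ∈ Ideal.span (Set.range fun i : Fin n => (X i.succ : MvPolynomial (Fin (n + 1)) K)) := by
  apply mem_of_support
  intro m hm
  obtain ⟨i, hi, hle⟩ := h m hm
  obtain ⟨i0, rfl⟩ := Fin.eq_succ_of_ne_zero hi
  obtain ⟨q, hq⟩ := X_pow_dvd_monomial' (k := 1) (c := coeff m f) hle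
  rw [pow_one] at hq
  rw [hq]
  exact Ideal.mul_mem_right _ _ (Ideal.subset_span ⟨i0, rfl⟩)

lemma dPoly_mem_J (s : ℕ) (r : Fin (n + 1)) (f : MvPolynomial (Fin (n + 1)) K)
    (hf : ∀ m ∈ f.support, P1 s m) :
    dPoly r f ∈
      Ideal.span (Set.range fun i : Fin n => (X i.succ : MvPolynomial (Fin (n + 1)) K)) +
      Ideal.span {(X (0 : Fin (n + 1)) : MvPolynomial (Fin (n + 1)) K) ^ s} := by
  apply mem_spanJ_of_forall_support
  intro m hm
  obtain ⟨hmem, h0⟩ := dPoly_support_subset r f hm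
  rcases hf _ hmem with (⟨i, j, hi, hj, hle⟩ | ⟨h1, i, hi, hmi⟩) | hC
  · exact Or.inl (keyA hi hj hle)
  · exact Or.inl (keyB h0 h1 hi hmi)
  · exact Or.inr (keyC h0 hC)

lemma dPoly_mem_Q (r : Fin (n + 1)) (f : MvPolynomial (Fin (n + 1)) K)
    (hf : ∀ m ∈ f.support, P2 m) :
    dPoly r f ∈
      Ideal.span (Set.range fun i : Fin n => (X i.succ : MvPolynomial (Fin (n + 1)) K)) := by
  apply mem_spanQ_of_forall_support
  intro m hm
  obtain ⟨hmem, h0⟩ := dPoly_support_subset r f hm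
  rcases hf _ hmem with ⟨i, j, hi, hj, hle⟩ | ⟨h1, i, hi, hmi⟩
  · exact keyA hi hj hle
  · exact keyB h0 h1 hi hmi

end StretchedAux

open StretchedAux MvPolynomial

/-- Let `I₁ = (x_1,…,x_{n-1})² + x_n(x_1,…,x_{n-1}) + (x_n^{s+1})` and
`I₂ = (x_1,…,x_{n-1})² + x_n(x_1,…,x_{n-1})` in `K[x_1,…,x_n]` (here with `n+1`
variables indexed by `Fin (n+1)`, `x_n` being the last one), and let `σ` be the
permutation ordering the variables as `x_n, x_1, …, x_{n-1}`. Then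
`d_σ(I₁) = (x_1,…,x_{n-1},x_n^s)` and `d_σ(I₂) = (x_1,…,x_{n-1})`, and in both cases
`d_σ(I)² ⊆ I`, i.e. `I₁` and `I₂` are `d_σ`-Golod. -/
theorem stretched_defining_ideal_dSigmaGolod {K : Type*} [Field K] {n : ℕ}
    (s : ℕ) (hs : 2 ≤ s)
    (Q I1 I2 : Ideal (MvPolynomial (Fin (n + 1)) K))
    (hQ : Q = Ideal.span (Set.range fun i : Fin n =>
      (MvPolynomial.X i.castSucc : MvPolynomial (Fin (n + 1)) K)))
    (hI1 : I1 = Q ^ 2 + Ideal.span {MvPolynomial.X (Fin.last n)} * Q +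
      Ideal.span {(MvPolynomial.X (Fin.last n) : MvPolynomial (Fin (n + 1)) K) ^ (s + 1)})
    (hI2 : I2 = Q ^ 2 + Ideal.span {(MvPolynomial.X (Fin.last n) :
      MvPolynomial (Fin (n + 1)) K)} * Q)
    (σ : Equiv.Perm (Fin (n + 1))) (hσ : σ = (finRotate (n + 1))⁻¹) :
    dIdealSigma σ I1 = Q + Ideal.span
        {(MvPolynomial.X (Fin.last n) : MvPolynomial (Fin (n + 1)) K) ^ s} ∧
    dIdealSigma σ I2 = Q ∧
    (dIdealSigma σ I1) ^ 2 ≤ I1 ∧ (dIdealSigma σ I2) ^ 2 ≤ I2 := by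
  classical
  have hσsymm : σ.symm = finRotate (n + 1) := by
    rw [hσ, Equiv.Perm.inv_def, Equiv.symm_symm]
  have hsymm_last : σ.symm (Fin.last n) = 0 := by rw [hσsymm]; exact finRotate_last
  have hsymm_cast : ∀ i : Fin n, σ.symm i.castSucc = i.succ := by
    intro i; rw [hσsymm, finRotate_succ_apply, Fin.coeSucc_eq_succ]
  have hσ_succ : ∀ i : Fin n, σ i.succ = i.castSucc := by
    intro i; rw [← hsymm_cast i, Equiv.apply_symm_apply]
  have hσ_0 : σ 0 = Fin.last n := by rw [← hsymm_last, Equiv.apply_symm_apply]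
  set Q' : Ideal (MvPolynomial (Fin (n + 1)) K) :=
    Ideal.span (Set.range fun i : Fin n => X i.succ) with hQ'
  -- rename computations
  have hmapQ : Ideal.map (rename σ.symm) Q = Q' := by
    rw [hQ, hQ', Ideal.map_span, ← Set.range_comp]
    have hfun : (⇑(rename (R := K) ⇑σ.symm) ∘ fun i : Fin n =>
        (X i.castSucc : MvPolynomial (Fin (n + 1)) K)) = fun i : Fin n => X i.succ := by
      funext i
      simp [hsymm_cast i]
    rw [hfun]
  have hmapQ' : Ideal.map (rename σ) Q' = Q := by
    rw [hQ, hQ', Ideal.map_span, ← Set.range_comp]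
    have hfun : (⇑(rename (R := K) ⇑σ) ∘ fun i : Fin n =>
        (X i.succ : MvPolynomial (Fin (n + 1)) K)) = fun i : Fin n => X i.castSucc := by
      funext i
      simp [hσ_succ i]
    rw [hfun]
  have hmapXl : Ideal.map (rename σ.symm)
      (Ideal.span {(X (Fin.last n) : MvPolynomial (Fin (n + 1)) K)}) =
      Ideal.span {(X 0 : MvPolynomial (Fin (n + 1)) K)} := by
    rw [Ideal.map_span, Set.image_singleton, rename_X, hsymm_last]
  have hmapXls1 : Ideal.map (rename σ.symm)
      (Ideal.span {(X (Fin.last n) : MvPolynomial (Fin (n + 1)) K) ^ (s + 1)}) =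
      Ideal.span {(X (0 : Fin (n + 1)) : MvPolynomial (Fin (n + 1)) K) ^ (s + 1)} := by
    rw [Ideal.map_span, Set.image_singleton, map_pow, rename_X, hsymm_last]
  have hmapX0s : Ideal.map (rename σ)
      (Ideal.span {(X (0 : Fin (n + 1)) : MvPolynomial (Fin (n + 1)) K) ^ s}) =
      Ideal.span {(X (Fin.last n) : MvPolynomial (Fin (n + 1)) K) ^ s} := by
    rw [Ideal.map_span, Set.image_singleton, map_pow, rename_X, hσ_0]
  -- suppIdeal bounds
  have hQ'sq : Q' ^ 2 ≤ suppIdeal P2 P2_mono := by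
    rw [pow_two, hQ', Ideal.span_mul_span, Ideal.span_le]
    rintro p hp
    simp only [Set.mem_mul, Set.mem_iUnion, Set.mem_range, Set.mem_singleton_iff, exists_prop] at hp
    obtain ⟨x, ⟨a, rfl⟩, y, ⟨b, rfl⟩, rfl⟩ := hp
    rw [SetLike.mem_coe, mem_suppIdeal]
    intro m hm
    rw [X_mul_X_eq, support_monomial, if_neg one_ne_zero, Finset.mem_singleton] at hm
    subst hm
    exact Or.inl ⟨a.succ, b.succ, Fin.succ_ne_zero a, Fin.succ_ne_zero b, le_refl _⟩
  have hX0Q' : Ideal.span {(X (0 : Fin (n + 1)) : MvPolynomial (Fin (n + 1)) K)} * Q' ≤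
      suppIdeal P2 P2_mono := by
    rw [hQ', Ideal.span_mul_span, Ideal.span_le]
    rintro p hp
    simp only [Set.mem_mul, Set.mem_iUnion, Set.mem_range, Set.mem_singleton_iff, exists_prop] at hp
    obtain ⟨x, rfl, y, ⟨a, rfl⟩, rfl⟩ := hp
    rw [SetLike.mem_coe, mem_suppIdeal]
    intro m hm
    rw [X_mul_X_eq, support_monomial, if_neg one_ne_zero, Finset.mem_singleton] at hm
    subst hm
    refine Or.inr ⟨?_, a.succ, Fin.succ_ne_zero a, ?_⟩ <;>
      simp [Finsupp.add_apply, Finsupp.single_apply, Fin.succ_ne_zero a,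
        Ne.symm (Fin.succ_ne_zero a)]
  have hX0s1 : Ideal.span {(X (0 : Fin (n + 1)) : MvPolynomial (Fin (n + 1)) K) ^ (s + 1)} ≤
      suppIdeal (P1 s) (P1_mono s) := by
    rw [Ideal.span_le]
    rintro p hp
    rw [Set.mem_singleton_iff] at hp
    subst hp
    rw [SetLike.mem_coe, mem_suppIdeal]
    intro m hm
    rw [X_pow_eq_monomial, support_monomial, if_neg one_ne_zero, Finset.mem_singleton] at hm
    subst hm
    exact Or.inr (by simp [Finsupp.single_apply])
  have hP2P1 : suppIdeal (K := K) (P2 (n := n)) P2_mono ≤ suppIdeal (P1 s) (P1_mono s) := by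
    intro f hf
    rw [mem_suppIdeal] at hf ⊢
    exact fun m hm => Or.inl (hf m hm)
  have hsub1 : Ideal.map (rename σ.symm) I1 ≤ suppIdeal (P1 s) (P1_mono s) := by
    rw [hI1, Submodule.add_eq_sup, Submodule.add_eq_sup, Ideal.map_sup, Ideal.map_sup,
      Ideal.map_pow, Ideal.map_mul, hmapQ, hmapXl, hmapXls1]
    exact sup_le (sup_le (hQ'sq.trans hP2P1) (hX0Q'.trans hP2P1)) hX0s1
  have hsub2 : Ideal.map (rename σ.symm) I2 ≤ suppIdeal P2 P2_mono := by
    rw [hI2, Submodule.add_eq_sup, Ideal.map_sup, Ideal.map_pow, Ideal.map_mul, hmapQ, hmapXl]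
    exact sup_le hQ'sq hX0Q'
  -- upper bounds
  have hup1 : dIdealSigma σ I1 ≤ Q + Ideal.span
      {(X (Fin.last n) : MvPolynomial (Fin (n + 1)) K) ^ s} := by
    rw [dIdealSigma, Ideal.span_le]
    rintro g ⟨f, hfI, i, rfl⟩
    have hf' : ∀ m ∈ (rename σ.symm f).support, P1 s m :=
      hsub1 (Ideal.mem_map_of_mem _ hfI)
    have hd := dPoly_mem_J s i (rename σ.symm f) hf'
    have hmem := Ideal.mem_map_of_mem (rename σ) hd
    rw [Submodule.add_eq_sup, Ideal.map_sup, hmapQ', hmapX0s] at hmem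
    rw [SetLike.mem_coe, Submodule.add_eq_sup]
    exact hmem
  have hup2 : dIdealSigma σ I2 ≤ Q := by
    rw [dIdealSigma, Ideal.span_le]
    rintro g ⟨f, hfI, i, rfl⟩
    have hf' : ∀ m ∈ (rename σ.symm f).support, P2 m :=
      hsub2 (Ideal.mem_map_of_mem _ hfI)
    have hd := dPoly_mem_Q i (rename σ.symm f) hf'
    have hmem := Ideal.mem_map_of_mem (rename σ) hd
    rw [hmapQ'] at hmem
    exact hmem
  -- computation of the key images
  have hdcomp : ∀ i : Fin n, dSigmaPoly σ 0
      ((X (Fin.last n) : MvPolynomial (Fin (n + 1)) K) * X i.castSucc) = X i.castSucc := by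
    intro i
    have e1 : dPoly (0 : Fin (n + 1)) (monomial
        (Finsupp.single (0 : Fin (n + 1)) 1 + Finsupp.single i.succ 1) (1 : K)) =
        monomial (Finsupp.single i.succ 1) 1 := by
      rw [dPoly_monomial _ _ _ one_ne_zero (fun k hk => absurd hk (Fin.not_lt_zero k))
        (by simp [Finsupp.add_apply, Finsupp.single_apply, Ne.symm (Fin.succ_ne_zero i)]),
        add_tsub_cancel_left]
    rw [dSigmaPoly, map_mul, rename_X, rename_X, hsymm_last, hsymm_cast, X_mul_X_eq, e1,
      show (monomial (Finsupp.single i.succ 1) (1 : K)) = X i.succ from rfl, rename_X, hσ_succ]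
  have hdcomp2 : dSigmaPoly σ 0
      ((X (Fin.last n) : MvPolynomial (Fin (n + 1)) K) ^ (s + 1)) = X (Fin.last n) ^ s := by
    have e1 : dPoly (0 : Fin (n + 1)) (monomial (Finsupp.single (0 : Fin (n + 1)) (s + 1))
        (1 : K)) = monomial (Finsupp.single (0 : Fin (n + 1)) s) 1 := by
      rw [dPoly_monomial _ _ _ one_ne_zero (fun k hk => absurd hk (Fin.not_lt_zero k))
        (by simp [Finsupp.single_apply]), ← Finsupp.single_tsub]
      norm_num
    rw [dSigmaPoly, map_pow, rename_X, hsymm_last, X_pow_eq_monomial, e1,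
      ← X_pow_eq_monomial, map_pow, rename_X, hσ_0]
  -- memberships of witnesses
  have hmemB : ∀ i : Fin n, (X (Fin.last n) : MvPolynomial (Fin (n + 1)) K) * X i.castSucc ∈
      Ideal.span {(X (Fin.last n) : MvPolynomial (Fin (n + 1)) K)} * Q :=
    fun i => Ideal.mul_mem_mul (Ideal.mem_span_singleton_self _)
      (by rw [hQ]; exact Ideal.subset_span ⟨i, rfl⟩)
  have hmemB1 : ∀ i : Fin n,
      (X (Fin.last n) : MvPolynomial (Fin (n + 1)) K) * X i.castSucc ∈ I1 := by
    intro i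
    rw [hI1, Submodule.add_eq_sup, Submodule.add_eq_sup]
    exact Submodule.mem_sup_left (Submodule.mem_sup_right (hmemB i))
  have hmemB2 : ∀ i : Fin n,
      (X (Fin.last n) : MvPolynomial (Fin (n + 1)) K) * X i.castSucc ∈ I2 := by
    intro i
    rw [hI2, Submodule.add_eq_sup]
    exact Submodule.mem_sup_right (hmemB i)
  have hmemC : (X (Fin.last n) : MvPolynomial (Fin (n + 1)) K) ^ (s + 1) ∈ I1 := by
    rw [hI1, Submodule.add_eq_sup]
    exact Submodule.mem_sup_right (Ideal.mem_span_singleton_self _)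
  -- lower bounds
  have hlow1 : Q + Ideal.span {(X (Fin.last n) : MvPolynomial (Fin (n + 1)) K) ^ s} ≤
      dIdealSigma σ I1 := by
    rw [Submodule.add_eq_sup]
    apply sup_le
    · rw [hQ, Ideal.span_le]
      rintro p ⟨i, rfl⟩
      exact Ideal.subset_span ⟨_, hmemB1 i, 0, (hdcomp i).symm⟩
    · rw [Ideal.span_le]
      rintro p hp
      rw [Set.mem_singleton_iff] at hp
      subst hp
      exact Ideal.subset_span ⟨_, hmemC, 0, hdcomp2.symm⟩
  have hlow2 : Q ≤ dIdealSigma σ I2 := by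
    rw [hQ, Ideal.span_le]
    rintro p ⟨i, rfl⟩
    exact Ideal.subset_span ⟨_, hmemB2 i, 0, (hdcomp i).symm⟩
  have e1 : dIdealSigma σ I1 = Q + Ideal.span
      {(X (Fin.last n) : MvPolynomial (Fin (n + 1)) K) ^ s} := le_antisymm hup1 hlow1
  have e2 : dIdealSigma σ I2 = Q := le_antisymm hup2 hlow2
  -- squares
  have hsq1 : (Q + Ideal.span {(X (Fin.last n) : MvPolynomial (Fin (n + 1)) K) ^ s}) ^ 2 ≤
      I1 := by
    set A := Ideal.span {(X (Fin.last n) : MvPolynomial (Fin (n + 1)) K) ^ s} with hA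
    have hQA : Q * A ≤ Ideal.span {(X (Fin.last n) : MvPolynomial (Fin (n + 1)) K)} * Q := by
      rw [mul_comm, hA]
      exact Ideal.mul_mono_left (Ideal.span_singleton_le_span_singleton.mpr
        (dvd_pow_self _ (by omega)))
    have hAA : A * A ≤ Ideal.span
        {(X (Fin.last n) : MvPolynomial (Fin (n + 1)) K) ^ (s + 1)} := by
      rw [hA, Ideal.span_singleton_mul_span_singleton, ← pow_add]
      exact Ideal.span_singleton_le_span_singleton.mpr (pow_dvd_pow _ (by omega))
    rw [pow_two, Submodule.add_eq_sup, Ideal.sup_mul, Ideal.mul_sup, Ideal.mul_sup, hI1]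
    simp only [Submodule.add_eq_sup]
    refine sup_le (sup_le ?_ ?_) (sup_le ?_ ?_)
    · rw [← pow_two]
      exact le_sup_left.trans le_sup_left
    · exact hQA.trans (le_sup_right.trans le_sup_left)
    · rw [mul_comm]
      exact hQA.trans (le_sup_right.trans le_sup_left)
    · exact hAA.trans le_sup_right
  have hsq2 : Q ^ 2 ≤ I2 := by
    rw [hI2, Submodule.add_eq_sup]
    exact le_sup_left
  exact ⟨e1, e2, by rw [e1]; exact hsq1, by rw [e2]; exact hsq2⟩
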